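/- Let q ∈ ℂ with |q| < 1, and let i denote the imaginary unit. Then 1 + U₂(i, q) = (iq;q)_∞ (−iq;q)_∞ = (−q²; q²)_∞. -/

import Mathlib

/-- The finite q-Pochhammer symbol `(z;q)_n = ∏_{i=0}^{n-1} (1 - z q^i)`. -/
noncomputable def qPoch (z q : ℂ) (n : ℕ) : ℂ := ∏ i ∈ Finset.range n, (1 - z * q ^ i)

/-- The infinite q-Pochhammer symbol `(z;q)_∞ = ∏_{i=0}^{∞} (1 - z q^i)`. -/
noncomputable def qPochInf (z q : ℂ) : ℂ := ∏' i : ℕ, (1 - z * q ^ i)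

/-- The rank generating function
`U_k(z,q) = ∑_{n=0}^∞ q^{k(n+1)} (−zq;q)_n (−z⁻¹q;q)_n` for strongly unimodal
sequences with a k-fold peak. -/
noncomputable def strongU (k : ℕ) (z q : ℂ) : ℂ :=
  ∑' n : ℕ, q ^ (k * (n + 1)) * qPoch (-(z * q)) q n * qPoch (-(z⁻¹ * q)) q n

open Complex Filter Topology Finset

lemma summable_log_aux (z q : ℂ) (hq : ‖q‖ < 1) :
    Summable fun n : ℕ => Complex.log (1 - z * q ^ n) := by
  have hgeo : Summable fun n : ℕ => 3 / 2 * ‖z‖ * ‖q‖ ^ n :=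
    (summable_geometric_of_lt_one (norm_nonneg q) hq).mul_left _
  refine Summable.of_norm_bounded_eventually_nat hgeo ?_
  have h0 : Filter.Tendsto (fun n : ℕ => ‖z‖ * ‖q‖ ^ n) atTop (nhds 0) := by
    simpa using (tendsto_pow_atTop_nhds_zero_of_lt_one (norm_nonneg q) hq).const_mul ‖z‖
  filter_upwards [h0.eventually_le_const (by norm_num : (0 : ℝ) < 1 / 2)] with n hn
  have hzq : ‖-(z * q ^ n)‖ ≤ 1 / 2 := by
    rw [norm_neg, norm_mul, norm_pow]; exact hn
  have hb := Complex.norm_log_one_add_half_le_self hzq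
  have heq : (1 : ℂ) + -(z * q ^ n) = 1 - z * q ^ n := by ring
  rw [heq, norm_neg, norm_mul, norm_pow] at hb
  calc ‖Complex.log (1 - z * q ^ n)‖ ≤ 3 / 2 * (‖z‖ * ‖q‖ ^ n) := hb
    _ = 3 / 2 * ‖z‖ * ‖q‖ ^ n := by ring

lemma ne_zero_aux {z q : ℂ} (hq : ‖q‖ < 1) (hz : ‖z‖ < 1) (n : ℕ) :
    1 - z * q ^ n ≠ 0 := by
  intro h
  have h1 : z * q ^ n = 1 := by linear_combination -h
  have hlt : ‖z * q ^ n‖ < 1 := by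
    rw [norm_mul, norm_pow]
    calc ‖z‖ * ‖q‖ ^ n ≤ ‖z‖ * 1 :=
          mul_le_mul_of_nonneg_left (pow_le_one₀ (norm_nonneg q) hq.le) (norm_nonneg z)
      _ < 1 := by simpa using hz
  rw [h1] at hlt; simp at hlt

lemma multipliable_aux {z q : ℂ} (hq : ‖q‖ < 1) (hz : ‖z‖ < 1) :
    Multipliable fun n : ℕ => 1 - z * q ^ n :=
  Complex.multipliable_of_summable_log (summable_log_aux z q hq)

lemma key_prod_identity (q : ℂ) (i : ℕ) :
    (1 - Complex.I * q * q ^ i) * (1 - -Complex.I * q * q ^ i)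
      = 1 - -q ^ 2 * (q ^ 2) ^ i := by
  have h : (q ^ 2) ^ i = q ^ i * q ^ i := by rw [← pow_mul, two_mul, pow_add]
  rw [h]
  linear_combination (-(q ^ 2 * q ^ i * q ^ i)) * Complex.I_sq

theorem strongU_two_at_i (q : ℂ) (hq : ‖q‖ < 1) :
    1 + strongU 2 Complex.I q
        = qPochInf (Complex.I * q) q * qPochInf (-Complex.I * q) q ∧
    qPochInf (Complex.I * q) q * qPochInf (-Complex.I * q) q
        = qPochInf (-q ^ 2) (q ^ 2) := by
  have hq' : ‖q‖ < 1 := hq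
  have hq2 : ‖q ^ 2‖ < 1 := by
    rw [norm_pow]; exact pow_lt_one₀ (norm_nonneg q) hq' (by norm_num)
  have hIq : ‖Complex.I * q‖ < 1 := by
    rw [norm_mul, Complex.norm_I, one_mul]; exact hq'
  have hIq' : ‖-Complex.I * q‖ < 1 := by rw [neg_mul, norm_neg]; exact hIq
  have hnq2 : ‖-q ^ 2‖ < 1 := by rwa [norm_neg]
  have m1 : Multipliable fun n : ℕ => 1 - Complex.I * q * q ^ n :=
    multipliable_aux hq' hIq
  have m2 : Multipliable fun n : ℕ => 1 - -Complex.I * q * q ^ n :=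
    multipliable_aux hq' hIq'
  have m3 : Multipliable fun n : ℕ => 1 - -q ^ 2 * (q ^ 2) ^ n :=
    multipliable_aux hq2 hnq2
  -- second equality
  have h2 : qPochInf (Complex.I * q) q * qPochInf (-Complex.I * q) q
      = qPochInf (-q ^ 2) (q ^ 2) := by
    unfold qPochInf
    rw [← m1.tprod_mul m2]
    exact tprod_congr fun i => key_prod_identity q i
  refine ⟨?_, h2⟩
  rw [h2]
  -- notation
  set f : ℕ → ℂ := fun n => 1 - -q ^ 2 * (q ^ 2) ^ n with hf
  set P : ℕ → ℂ := fun n => ∏ i ∈ Finset.range n, f i with hP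
  set g : ℕ → ℂ := fun n =>
    q ^ (2 * (n + 1)) * qPoch (-(Complex.I * q)) q n * qPoch (-((Complex.I)⁻¹ * q)) q n
    with hg
  have hpow : ∀ n : ℕ, q ^ (2 * (n + 1)) = q ^ 2 * (q ^ 2) ^ n := by
    intro n
    rw [← pow_mul, ← pow_add]
    congr 1; ring
  have hprodP : ∀ n : ℕ,
      qPoch (-(Complex.I * q)) q n * qPoch (-((Complex.I)⁻¹ * q)) q n = P n := by
    intro n
    unfold qPoch
    rw [hP, ← Finset.prod_mul_distrib]
    refine Finset.prod_congr rfl fun i _ => ?_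
    rw [Complex.inv_I, hf]
    linear_combination key_prod_identity q i
  have hgP : ∀ n : ℕ, g n = q ^ (2 * (n + 1)) * P n := by
    intro n; rw [hg]; dsimp only; rw [mul_assoc, hprodP]
  have hterm : ∀ n : ℕ, g n = P (n + 1) - P n := by
    intro n
    rw [hgP, hP]
    simp only [Finset.prod_range_succ]
    rw [hpow, hf]
    ring
  -- uniform bound on partial products
  set s : ℝ := ‖q‖ ^ 2 with hs
  have hs0 : 0 ≤ s := by positivity
  have hs1 : s < 1 := by rw [hs, ← norm_pow]; exact hq2
  set C : ℝ := Real.exp (s / (1 - s)) with hC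
  have hC0 : 0 < C := Real.exp_pos _
  have hPbound : ∀ n : ℕ, ‖P n‖ ≤ C := by
    intro n
    calc ‖P n‖ ≤ ∏ i ∈ Finset.range n, ‖f i‖ := norm_prod_le _ _
      _ ≤ ∏ i ∈ Finset.range n, Real.exp (s * s ^ i) := by
          refine Finset.prod_le_prod (fun i _ => norm_nonneg _) fun i _ => ?_
          have h1 : ‖f i‖ ≤ 1 + s * s ^ i := by
            rw [hf]
            calc ‖1 - -q ^ 2 * (q ^ 2) ^ i‖ ≤ ‖(1 : ℂ)‖ + ‖-q ^ 2 * (q ^ 2) ^ i‖ :=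
                  norm_sub_le _ _
              _ = 1 + s * s ^ i := by
                  rw [norm_one, norm_mul, norm_neg, norm_pow, norm_pow, norm_pow, hs]
          exact h1.trans (by linarith [Real.add_one_le_exp (s * s ^ i)])
      _ = Real.exp (∑ i ∈ Finset.range n, s * s ^ i) := (Real.exp_sum _ _).symm
      _ ≤ C := by
          rw [hC, Real.exp_le_exp]
          have hsum : ∑ i ∈ Finset.range n, s * s ^ i
              = s * ∑ i ∈ Finset.range n, s ^ i := by rw [Finset.mul_sum]
          have hgs : ∑ i ∈ Finset.range n, s ^ i ≤ (1 - s)⁻¹ := by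
            have := Summable.sum_le_tsum (Finset.range n)
              (fun i _ => pow_nonneg hs0 i)
              (summable_geometric_of_lt_one hs0 hs1)
            rwa [tsum_geometric_of_lt_one hs0 hs1] at this
          rw [hsum, div_eq_mul_inv]
          exact mul_le_mul_of_nonneg_left hgs hs0
  -- summability of g with norms
  have hgnorm : ∀ n : ℕ, ‖g n‖ ≤ C * s * s ^ n := by
    intro n
    rw [hgP, hpow]
    simp only [norm_mul, norm_pow, ← hs]
    calc s * s ^ n * ‖P n‖ ≤ s * s ^ n * C :=
          mul_le_mul_of_nonneg_left (hPbound n) (by positivity)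
      _ = C * s * s ^ n := by ring
  have hsum_norm : Summable fun n : ℕ => ‖g n‖ := by
    refine Summable.of_nonneg_of_le (fun n => norm_nonneg _) hgnorm ?_
    exact (summable_geometric_of_lt_one hs0 hs1).mul_left _
  -- the limit
  set L : ℂ := ∏' n : ℕ, f n with hL
  have hTend : Filter.Tendsto P atTop (nhds L) := m3.hasProd.tendsto_prod_nat
  have hpartial : ∀ N : ℕ, ∑ n ∈ Finset.range N, g n = P N - 1 := by
    intro N
    have h0 : P 0 = 1 := by simp [hP]
    calc ∑ n ∈ Finset.range N, g n = ∑ n ∈ Finset.range N, (P (n + 1) - P n) :=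
          Finset.sum_congr rfl fun n _ => hterm n
      _ = P N - P 0 := Finset.sum_range_sub P N
      _ = P N - 1 := by rw [h0]
  have hHasSum : HasSum g (L - 1) := by
    rw [hasSum_iff_tendsto_nat_of_summable_norm hsum_norm]
    have : Filter.Tendsto (fun N => P N - 1) atTop (nhds (L - 1)) :=
      hTend.sub_const 1
    exact this.congr fun N => (hpartial N).symm
  have hU : strongU 2 Complex.I q = L - 1 := by
    unfold strongU
    exact hHasSum.tsum_eq
  have hLq : qPochInf (-q ^ 2) (q ^ 2) = L := rfl
  rw [hU, hLq]; ring
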